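/- Let U ⊆ ℝ^(n+2) be open, (ξ, N) a null frame on U, and Z : U → ℝ^(n+2) a differentiable closed conformal field with factor φ : U → ℝ; let Z* : U → ℝ^(n+2), Z*(p) = P_p(Z p), be its (differentiable) screen part. Then for every p ∈ U and every screen vector v at p: (a) φ(p) • v = P_p(fderiv ℝ Z* p v) - η(Z p, N p) • A*_ξ(p)(v) - η(Z p, ξ p) • A_N(p)(v); (b) η(A_N(p)(v), Z*(p)) + D_v(q ↦ η(Z q, N q))(p) - η(Z p, N p) * τ_p(v) = 0; (c) η(A*_ξ(p)(v), Z*(p)) + D_v(q ↦ η(Z q, ξ q))(p) + η(Z p, ξ p) * τ_p(v) = 0. (Flat-Minkowski-ambient form of the paper's lemma giving the screen, radical and transversal components of the closed conformal equation along a null hypersurface.) -/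

import Mathlib

open scoped BigOperators

noncomputable section

/-- Euclidean space `ℝ^m`. -/
abbrev E (m : ℕ) : Type := EuclideanSpace ℝ (Fin m)

/-- The Minkowski bilinear form `η(x,y) = -(x 0)(y 0) + ∑_{i≥1} (x i)(y i)` on `ℝ^(n+2)`. -/
def eta {n : ℕ} (x y : E (n + 2)) : ℝ :=
  (∑ i, x i * y i) - 2 * (x 0 * y 0)

/-- Screen projection `P_p(w) = w - η(w,N)ξ - η(w,ξ)N` determined by the null frame at a point. -/
def sproj {n : ℕ} (xi N w : E (n + 2)) : E (n + 2) :=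
  w - eta w N • xi - eta w xi • N

/-- Screen shape operator `A*_ξ(p)(v) = -P_p(D_v ξ (p))`. -/
def Astar {n : ℕ} (xi N : E (n + 2) → E (n + 2)) (p v : E (n + 2)) : E (n + 2) :=
  -sproj (xi p) (N p) (fderiv ℝ xi p v)

/-- Shape operator `A_N(p)(v) = -P_p(D_v N (p))`. -/
def AN {n : ℕ} (xi N : E (n + 2) → E (n + 2)) (p v : E (n + 2)) : E (n + 2) :=
  -sproj (xi p) (N p) (fderiv ℝ N p v)

/-- Transversal one-form `τ_p(v) = η(D_v N(p), ξ p)`. -/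
def tau {n : ℕ} (xi N : E (n + 2) → E (n + 2)) (p v : E (n + 2)) : ℝ :=
  eta (fderiv ℝ N p v) (xi p)

/-- Screen part `Z*(p) = P_p(Z p)` of a vector field. -/
def Zstar {n : ℕ} (xi N Z : E (n + 2) → E (n + 2)) (p : E (n + 2)) : E (n + 2) :=
  sproj (xi p) (N p) (Z p)

/-- `A_{Z⊥}(p)(v) = η(Z p, N p) • A*_ξ(p)(v) + η(Z p, ξ p) • A_N(p)(v)`. -/
def AZperp {n : ℕ} (xi N Z : E (n + 2) → E (n + 2)) (p v : E (n + 2)) : E (n + 2) :=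
  eta (Z p) (N p) • Astar xi N p v + eta (Z p) (xi p) • AN xi N p v

-- auxiliary lemmas

lemma eta_comm {n : ℕ} (x y : E (n+2)) : eta x y = eta y x := by
  unfold eta
  rw [Finset.sum_congr rfl (fun i _ => mul_comm (x i) (y i))]; ring

lemma eta_add_left {n : ℕ} (x x' y : E (n+2)) : eta (x + x') y = eta x y + eta x' y := by
  simp [eta, add_mul, Finset.sum_add_distrib]; ring

lemma eta_smul_left {n : ℕ} (c : ℝ) (x y : E (n+2)) : eta (c • x) y = c * eta x y := by
  simp only [eta, PiLp.smul_apply, smul_eq_mul, mul_assoc, ← Finset.mul_sum]; ring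

lemma eta_neg_left {n : ℕ} (x y : E (n+2)) : eta (-x) y = -eta x y := by
  simp [eta, Finset.sum_neg_distrib]; ring

lemma eta_sub_left {n : ℕ} (x x' y : E (n+2)) : eta (x - x') y = eta x y - eta x' y := by
  rw [sub_eq_add_neg, eta_add_left, eta_neg_left]; ring

lemma eta_add_right {n : ℕ} (x y y' : E (n+2)) : eta x (y + y') = eta x y + eta x y' := by
  rw [eta_comm, eta_add_left, eta_comm y, eta_comm y']

lemma eta_smul_right {n : ℕ} (c : ℝ) (x y : E (n+2)) : eta x (c • y) = c * eta x y := by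
  rw [eta_comm, eta_smul_left, eta_comm]

lemma eta_neg_right {n : ℕ} (x y : E (n+2)) : eta x (-y) = -eta x y := by
  rw [eta_comm, eta_neg_left, eta_comm]

lemma eta_sub_right {n : ℕ} (x y y' : E (n+2)) : eta x (y - y') = eta x y - eta x y' := by
  rw [eta_comm, eta_sub_left, eta_comm y, eta_comm y']

lemma eta_eq_inner {n : ℕ} (x y : E (n+2)) : eta x y = inner ℝ x y - 2 * (x 0 * y 0) := by
  simp [eta, PiLp.inner_apply, RCLike.inner_apply, conj_trivial, mul_comm]

lemma coord_hasFDerivAt {n : ℕ} {f : E (n+2) → E (n+2)} {f' : E (n+2) →L[ℝ] E (n+2)}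
    {p : E (n+2)} (hf : HasFDerivAt f f' p) :
    HasFDerivAt (fun q => f q 0) ((EuclideanSpace.proj (0 : Fin (n+2))).comp f') p := by
  exact ((EuclideanSpace.proj (0 : Fin (n+2))).hasFDerivAt).comp p hf

lemma eta_hasFDerivAt {n : ℕ} {f g : E (n+2) → E (n+2)} {f' g' : E (n+2) →L[ℝ] E (n+2)}
    {p : E (n+2)} (hf : HasFDerivAt f f' p) (hg : HasFDerivAt g g' p) :
    HasFDerivAt (fun q => eta (f q) (g q))
      ((fderivInnerCLM ℝ (f p, g p)).comp (f'.prod g')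
        - (2 : ℝ) • ((f p 0) • ((EuclideanSpace.proj (0 : Fin (n+2))).comp g')
            + (g p 0) • ((EuclideanSpace.proj (0 : Fin (n+2))).comp f'))) p := by
  have h1 : HasFDerivAt (fun q => (inner ℝ (f q) (g q) : ℝ))
      ((fderivInnerCLM ℝ (f p, g p)).comp (f'.prod g')) p := hf.inner ℝ hg
  have h2 := (coord_hasFDerivAt hf).mul (coord_hasFDerivAt hg)
  have h3 := h1.sub (h2.const_mul (2:ℝ))
  have he : (fun q => eta (f q) (g q)) = fun q => (inner ℝ (f q) (g q) : ℝ) - 2 * (f q 0 * g q 0) := by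
    funext q; exact eta_eq_inner _ _
  rw [he]
  exact h3

lemma eta_differentiableAt {n : ℕ} {f g : E (n+2) → E (n+2)} {p : E (n+2)}
    (hf : DifferentiableAt ℝ f p) (hg : DifferentiableAt ℝ g p) :
    DifferentiableAt ℝ (fun q => eta (f q) (g q)) p :=
  (eta_hasFDerivAt hf.hasFDerivAt hg.hasFDerivAt).differentiableAt

lemma fderiv_eta_apply {n : ℕ} {f g : E (n+2) → E (n+2)} {p v : E (n+2)}
    (hf : DifferentiableAt ℝ f p) (hg : DifferentiableAt ℝ g p) :
    fderiv ℝ (fun q => eta (f q) (g q)) p v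
      = eta (fderiv ℝ f p v) (g p) + eta (f p) (fderiv ℝ g p v) := by
  rw [(eta_hasFDerivAt hf.hasFDerivAt hg.hasFDerivAt).fderiv]
  simp [eta_eq_inner, fderivInnerCLM, PiLp.inner_apply, RCLike.inner_apply, conj_trivial]
  ring

/-- The screen, radical and transversal components of the closed conformal
equation along a null hypersurface (flat Minkowski ambient form). -/
theorem cc_equation_components {n : ℕ}
    (U : Set (E (n + 2))) (hU : IsOpen U)
    (ξ N Z : E (n + 2) → E (n + 2)) (φ : E (n + 2) → ℝ)
    (hξd : ∀ p ∈ U, DifferentiableAt ℝ ξ p)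
    (hNd : ∀ p ∈ U, DifferentiableAt ℝ N p)
    (hZd : ∀ p ∈ U, DifferentiableAt ℝ Z p)
    (hξξ : ∀ p ∈ U, eta (ξ p) (ξ p) = 0)
    (hNN : ∀ p ∈ U, eta (N p) (N p) = 0)
    (hξN : ∀ p ∈ U, eta (ξ p) (N p) = 1)
    (hCC : ∀ p ∈ U, fderiv ℝ Z p = φ p • ContinuousLinearMap.id ℝ (E (n + 2))) :
    ∀ p ∈ U, ∀ v : E (n + 2), eta v (ξ p) = 0 → eta v (N p) = 0 →
      (φ p • v = sproj (ξ p) (N p) (fderiv ℝ (Zstar ξ N Z) p v)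
          - eta (Z p) (N p) • Astar ξ N p v - eta (Z p) (ξ p) • AN ξ N p v) ∧
      (eta (AN ξ N p v) (Zstar ξ N Z p)
          + fderiv ℝ (fun q => eta (Z q) (N q)) p v
          - eta (Z p) (N p) * tau ξ N p v = 0) ∧
      (eta (Astar ξ N p v) (Zstar ξ N Z p)
          + fderiv ℝ (fun q => eta (Z q) (ξ q)) p v
          + eta (Z p) (ξ p) * tau ξ N p v = 0) := by
  intro p hp v hvξ hvN
  have hξp := hξd p hp; have hNp := hNd p hp; have hZp := hZd p hp
  set W := fderiv ℝ N p v with hW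
  set W' := fderiv ℝ ξ p v with hW'
  have hZv : fderiv ℝ Z p v = φ p • v := by rw [hCC p hp]; simp
  -- derivative of constant eta-combinations
  have hconstNN : fderiv ℝ (fun q => eta (N q) (N q)) p v = 0 := by
    have hev : (fun q => eta (N q) (N q)) =ᶠ[nhds p] fun _ => (0:ℝ) :=
      Filter.eventuallyEq_of_mem (hU.mem_nhds hp) hNN
    rw [hev.fderiv_eq]; simp
  have hconstξξ : fderiv ℝ (fun q => eta (ξ q) (ξ q)) p v = 0 := by
    have hev : (fun q => eta (ξ q) (ξ q)) =ᶠ[nhds p] fun _ => (0:ℝ) :=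
      Filter.eventuallyEq_of_mem (hU.mem_nhds hp) hξξ
    rw [hev.fderiv_eq]; simp
  have hconstξN : fderiv ℝ (fun q => eta (ξ q) (N q)) p v = 0 := by
    have hev : (fun q => eta (ξ q) (N q)) =ᶠ[nhds p] fun _ => (1:ℝ) :=
      Filter.eventuallyEq_of_mem (hU.mem_nhds hp) hξN
    rw [hev.fderiv_eq]; simp
  have hWN : eta W (N p) = 0 := by
    have h := fderiv_eta_apply (p := p) (v := v) hNp hNp
    rw [hconstNN, eta_comm (N p) W] at h; linarith
  have hW'ξ : eta W' (ξ p) = 0 := by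
    have h := fderiv_eta_apply (p := p) (v := v) hξp hξp
    rw [hconstξξ, eta_comm (ξ p) W'] at h; linarith
  have hW'N : eta W' (N p) = - eta W (ξ p) := by
    have h := fderiv_eta_apply (p := p) (v := v) hξp hNp
    rw [hconstξN, eta_comm (ξ p) W] at h; linarith
  have hDa : fderiv ℝ (fun q => eta (Z q) (N q)) p v = eta (Z p) W := by
    rw [fderiv_eta_apply hZp hNp, hZv, eta_smul_left, hvN]; ring
  have hDb : fderiv ℝ (fun q => eta (Z q) (ξ q)) p v = eta (Z p) W' := by
    rw [fderiv_eta_apply hZp hξp, hZv, eta_smul_left, hvξ]; ring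
  -- derivative of Zstar
  have hA : HasFDerivAt (fun q => eta (Z q) (N q))
      (fderiv ℝ (fun q => eta (Z q) (N q)) p) p :=
    (eta_differentiableAt hZp hNp).hasFDerivAt
  have hB : HasFDerivAt (fun q => eta (Z q) (ξ q))
      (fderiv ℝ (fun q => eta (Z q) (ξ q)) p) p :=
    (eta_differentiableAt hZp hξp).hasFDerivAt
  have h1 := hA.smul hξp.hasFDerivAt
  have h2 := hB.smul hNp.hasFDerivAt
  have hstar : HasFDerivAt (Zstar ξ N Z)
      ((fderiv ℝ Z p
        - (eta (Z p) (N p) • fderiv ℝ ξ p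
            + (fderiv ℝ (fun q => eta (Z q) (N q)) p).smulRight (ξ p)))
        - (eta (Z p) (ξ p) • fderiv ℝ N p
            + (fderiv ℝ (fun q => eta (Z q) (ξ q)) p).smulRight (N p))) p := by
    exact (hZp.hasFDerivAt.sub h1).sub h2
  have hDZstar : fderiv ℝ (Zstar ξ N Z) p v
      = φ p • v - eta (Z p) W • ξ p - eta (Z p) (N p) • W'
          - eta (Z p) W' • N p - eta (Z p) (ξ p) • W := by
    rw [hstar.fderiv]
    simp only [ContinuousLinearMap.coe_sub', Pi.sub_apply, ContinuousLinearMap.add_apply,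
      ContinuousLinearMap.coe_smul', Pi.smul_apply, ContinuousLinearMap.smulRight_apply,
      hDa, hDb, hZv, ← hW, ← hW']
    abel
  have hNξ : eta (N p) (ξ p) = 1 := by rw [eta_comm]; exact hξN p hp
  have hZN' : eta (N p) (Z p) = eta (Z p) (N p) := eta_comm _ _
  have hZξ' : eta (ξ p) (Z p) = eta (Z p) (ξ p) := eta_comm _ _
  have hWZ : eta W (Z p) = eta (Z p) W := eta_comm _ _
  have hW'Z : eta W' (Z p) = eta (Z p) W' := eta_comm _ _
  have hNW : eta (N p) W = eta W (N p) := eta_comm _ _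
  have hNW' : eta (N p) W' = eta W' (N p) := eta_comm _ _
  have hξW : eta (ξ p) W = eta W (ξ p) := eta_comm _ _
  have hξW' : eta (ξ p) W' = eta W' (ξ p) := eta_comm _ _
  refine ⟨?_, ?_, ?_⟩
  · rw [hDZstar]
    simp only [sproj, Astar, AN, Zstar, ← hW, ← hW']
    simp only [eta_sub_left, eta_add_left, eta_smul_left, eta_neg_left,
      eta_sub_right, eta_add_right, eta_smul_right, eta_neg_right,
      hvξ, hvN, hξξ p hp, hNN p hp, hξN p hp, hNξ, hWN, hW'ξ, hW'N,
      hNW, hNW', hξW, hξW']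
    module
  · simp only [sproj, Astar, AN, Zstar, tau, ← hW, ← hW', hDa]
    simp only [eta_sub_left, eta_add_left, eta_smul_left, eta_neg_left,
      eta_sub_right, eta_add_right, eta_smul_right, eta_neg_right,
      hvξ, hvN, hξξ p hp, hNN p hp, hξN p hp, hNξ, hWN, hW'ξ, hW'N,
      hZN', hZξ', hWZ, hW'Z, hNW, hNW', hξW, hξW']
    ring
  · simp only [sproj, Astar, AN, Zstar, tau, ← hW, ← hW', hDb]
    simp only [eta_sub_left, eta_add_left, eta_smul_left, eta_neg_left,
      eta_sub_right, eta_add_right, eta_smul_right, eta_neg_right,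
      hvξ, hvN, hξξ p hp, hNN p hp, hξN p hp, hNξ, hWN, hW'ξ, hW'N,
      hZN', hZξ', hWZ, hW'Z, hNW, hNW', hξW, hξW']
    ring


end
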